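/- Let X ∈ {−1,+1}^{n×k} with k ≥ 2, and let c be an integer with 0 ≤ c ≤ k. Suppose every row of X sums to 2c − k, i.e., X 1_k = (2c − k) 1_n. Define φ = ⌊2nc(k−c)/(k²−k)⌋ and ψ = 2nc(k−c) − (k²−k)φ. Then Σ_{l=1}^k Σ_{j=1}^k ‖X_{:,l} − X_{:,j}‖₁² ≥ 4[(k²−k)φ² + ψ(2φ+1)]. -/

import Mathlib

open BigOperators

set_option maxHeartbeats 1000000 in
/-- if `k ≥ 2` and every row of `X ∈ {±1}^{n×k}` sums to `2c − k`,
then with `φ = ⌊2nc(k−c)/(k²−k)⌋` and `ψ = 2nc(k−c) − (k²−k)φ`, one has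
`Σₗ Σⱼ ‖X₍:,l₎ − X₍:,j₎‖₁² ≥ 4[(k²−k)φ² + ψ(2φ+1)]`. -/
theorem stmt_8 {n k : ℕ} (X : Matrix (Fin n) (Fin k) ℝ)
    (hX : ∀ i j, X i j = 1 ∨ X i j = -1)
    (hk : 2 ≤ k)
    (c : ℕ) (hck : c ≤ k)
    (hrow : ∀ i, ∑ j, X i j = 2 * (c : ℝ) - (k : ℝ))
    (φ ψ : ℕ)
    (hφ : φ = 2 * n * c * (k - c) / (k ^ 2 - k))
    (hψ : ψ = 2 * n * c * (k - c) - (k ^ 2 - k) * φ) :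
    ∑ l, ∑ j, (∑ i, |X i l - X i j|) ^ 2
      ≥ 4 * (((k : ℝ) ^ 2 - (k : ℝ)) * (φ : ℝ) ^ 2
          + (ψ : ℝ) * (2 * (φ : ℝ) + 1)) := by
  classical
  set N : Fin k → Fin k → ℕ :=
    fun l j => (Finset.univ.filter (fun i => X i l ≠ X i j)).card with hN
  -- each column distance is 2 * N l j
  have hsum2 : ∀ l j, ∑ i, |X i l - X i j| = 2 * (N l j : ℝ) := by
    intro l j
    calc ∑ i, |X i l - X i j|
        = ∑ i, (if X i l ≠ X i j then (2:ℝ) else 0) := by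
          refine Finset.sum_congr rfl fun i _ => ?_
          rcases hX i l with h1 | h1 <;> rcases hX i j with h2 | h2 <;>
            simp [h1, h2] <;> norm_num
      _ = ∑ i ∈ Finset.univ.filter (fun i => X i l ≠ X i j), (2:ℝ) :=
          (Finset.sum_filter _ _).symm
      _ = 2 * (N l j : ℝ) := by
          rw [Finset.sum_const, nsmul_eq_mul, mul_comm, hN]
  have habs : ∀ i l j, |X i l - X i j| = 1 - X i l * X i j := by
    intro i l j
    rcases hX i l with h1 | h1 <;> rcases hX i j with h2 | h2 <;>
      rw [h1, h2] <;> norm_num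
  -- total sum
  have hStot : ∑ l, ∑ j, (N l j : ℝ) = 2 * n * c * ((k:ℝ) - c) := by
    have h1 : ∑ l, ∑ j, 2 * (N l j : ℝ) = ∑ l, ∑ j, ∑ i, |X i l - X i j| := by
      simp_rw [hsum2]
    have h2 : ∑ l, ∑ j, ∑ i, |X i l - X i j|
        = ∑ i, ∑ l : Fin k, ∑ j : Fin k, (1 - X i l * X i j) := by
      simp_rw [habs]
      calc ∑ l : Fin k, ∑ j : Fin k, ∑ i : Fin n, (1 - X i l * X i j)
          = ∑ l : Fin k, ∑ i : Fin n, ∑ j : Fin k, (1 - X i l * X i j) :=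
            Finset.sum_congr rfl fun l _ => Finset.sum_comm
        _ = ∑ i : Fin n, ∑ l : Fin k, ∑ j : Fin k, (1 - X i l * X i j) :=
            Finset.sum_comm
    have h3 : ∀ i : Fin n, ∑ l : Fin k, ∑ j : Fin k, (1 - X i l * X i j)
        = (k:ℝ) * k - (2*(c:ℝ) - k) * (2*(c:ℝ) - k) := by
      intro i
      have : ∑ l : Fin k, ∑ j : Fin k, (1 - X i l * X i j)
          = ∑ l : Fin k, ((k:ℝ) - X i l * (2*(c:ℝ) - k)) := by
        refine Finset.sum_congr rfl fun l _ => ?_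
        rw [Finset.sum_sub_distrib, Finset.sum_const, ← Finset.mul_sum, hrow i]
        simp
      rw [this, Finset.sum_sub_distrib, Finset.sum_const, ← Finset.sum_mul, hrow i]
      simp [mul_comm]
    have h4 : ∑ l, ∑ j, 2 * (N l j : ℝ)
        = (n:ℝ) * ((k:ℝ) * k - (2*(c:ℝ) - k) * (2*(c:ℝ) - k)) := by
      rw [h1, h2]
      rw [Finset.sum_congr rfl fun i _ => h3 i, Finset.sum_const]
      simp [nsmul_eq_mul]
    have h5 : ∑ l, ∑ j, 2 * (N l j : ℝ) = 2 * ∑ l, ∑ j, (N l j : ℝ) := by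
      rw [Finset.mul_sum]
      exact Finset.sum_congr rfl fun l _ => by rw [Finset.mul_sum]
    rw [h5] at h4
    nlinarith [h4]
  -- cast facts
  have hkk : k ≤ k ^ 2 := by nlinarith
  have hmpos : 0 < k ^ 2 - k := by
    have : k + 1 ≤ k ^ 2 := by nlinarith
    omega
  have hle : (k ^ 2 - k) * φ ≤ 2 * n * c * (k - c) := by
    rw [hφ, mul_comm]
    exact Nat.div_mul_le_self _ _
  have hψR : (ψ:ℝ) = 2 * n * c * ((k:ℝ) - c) - ((k:ℝ)^2 - (k:ℝ)) * φ := by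
    rw [hψ, Nat.cast_sub hle]
    push_cast [Nat.cast_sub hck, Nat.cast_sub hkk]
    ring
  -- rewrite goal
  have hrw : ∀ l j, (∑ i, |X i l - X i j|) ^ 2 = 4 * (N l j : ℝ)^2 := by
    intro l j; rw [hsum2]; ring
  simp_rw [hrw]
  have hfac : ∑ l, ∑ j, 4 * (N l j : ℝ)^2 = 4 * ∑ l, ∑ j, (N l j : ℝ)^2 := by
    rw [Finset.mul_sum]
    exact Finset.sum_congr rfl fun l _ => by rw [Finset.mul_sum]
  rw [hfac, ge_iff_le]
  have h4 : (0:ℝ) < 4 := by norm_num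
  rw [mul_le_mul_iff_right₀ h4]
  -- core inequality
  set B : ℝ := 2 * (φ:ℝ) + 1 with hB
  have hdiag : ∀ l, N l l = 0 := by
    intro l; simp [hN]
  have hpt : ∀ l j : Fin k, l ≠ j →
      (φ:ℝ)^2 - B * φ ≤ (N l j : ℝ)^2 - B * N l j := by
    intro l j _
    have hc : (0:ℝ) ≤ ((N l j : ℝ) - φ) * ((N l j : ℝ) - φ - 1) := by
      rcases le_or_gt (N l j) φ with h | h
      · have h1 : (N l j : ℝ) ≤ (φ:ℝ) := by exact_mod_cast h
        nlinarith [h1]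
      · have h1 : (φ:ℝ) + 1 ≤ (N l j : ℝ) := by exact_mod_cast h
        apply mul_nonneg <;> linarith
    nlinarith [hc]
  have hsumpt : ∑ l : Fin k, ∑ j : Fin k, (if l = j then (0:ℝ) else ((φ:ℝ)^2 - B * φ))
      ≤ ∑ l, ∑ j, ((N l j : ℝ)^2 - B * N l j) := by
    refine Finset.sum_le_sum fun l _ => Finset.sum_le_sum fun j _ => ?_
    by_cases h : l = j
    · subst h; simp [hdiag l]
    · rw [if_neg h]; exact hpt l j h
  have hlhs : ∑ l : Fin k, ∑ j : Fin k, (if l = j then (0:ℝ) else ((φ:ℝ)^2 - B * φ))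
      = (k:ℝ) * ((k:ℝ) - 1) * ((φ:ℝ)^2 - B * φ) := by
    have hrow' : ∀ l : Fin k, ∑ j : Fin k, (if l = j then (0:ℝ) else ((φ:ℝ)^2 - B * φ))
        = ((k:ℝ) - 1) * ((φ:ℝ)^2 - B * φ) := by
      intro l
      have : ∀ j : Fin k, (if l = j then (0:ℝ) else ((φ:ℝ)^2 - B * φ))
          = ((φ:ℝ)^2 - B * φ) - (if l = j then ((φ:ℝ)^2 - B * φ) else 0) := by
        intro j; split <;> ring
      simp_rw [this]
      rw [Finset.sum_sub_distrib, Finset.sum_const, Finset.sum_ite_eq]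
      simp [Finset.card_univ]
      ring
    rw [Finset.sum_congr rfl fun l _ => hrow' l, Finset.sum_const]
    simp [Finset.card_univ, nsmul_eq_mul]
    ring
  have hrhs : ∑ l : Fin k, ∑ j : Fin k, ((N l j : ℝ)^2 - B * N l j)
      = (∑ l : Fin k, ∑ j : Fin k, (N l j : ℝ)^2)
        - B * ∑ l : Fin k, ∑ j : Fin k, (N l j : ℝ) := by
    rw [Finset.mul_sum, ← Finset.sum_sub_distrib]
    refine Finset.sum_congr rfl fun l _ => ?_
    rw [Finset.mul_sum, ← Finset.sum_sub_distrib]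
  rw [hlhs, hrhs, hStot] at hsumpt
  have hkR : (2:ℝ) ≤ (k:ℝ) := by exact_mod_cast hk
  have e1 : (k:ℝ)*((k:ℝ)-1)*((φ:ℝ)^2 - B*(φ:ℝ))
      = ((k:ℝ)^2-(k:ℝ))*(φ:ℝ)^2 - ((k:ℝ)^2-(k:ℝ))*B*(φ:ℝ) := by ring
  have e2 : (ψ:ℝ)*B = B*(2*(n:ℝ)*(c:ℝ)*((k:ℝ)-(c:ℝ))) - ((k:ℝ)^2-(k:ℝ))*B*(φ:ℝ) := by
    rw [hψR]; ring
  linarith [hsumpt, e1, e2]
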